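/- In the setting of the generalized Weiszfeld algorithm (Ω_i nonempty closed convex, S nonempty closed convex disjoint from each Ω_i, α_i > 0, λ > 0, v ∈ R^n, φ_v(x) = Σ_i α_i d(x; Ω_i) + (λ/2)‖x‖² − ⟨v, x⟩), a point x̄ ∈ S satisfies P(F_v(x̄); S) = x̄ if and only if x̄ is the unique minimizer of φ_v over S. -/

import Mathlib

open Metric

open Classical in
noncomputable def proj (n : ℕ) (Q : Set (EuclideanSpace ℝ (Fin n)))
    (x : EuclideanSpace ℝ (Fin n)) : EuclideanSpace ℝ (Fin n) :=
  if h : ∃ p ∈ Q, dist x p = Metric.infDist x Q then h.choose else x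

lemma proj_spec {n : ℕ} {Q : Set (EuclideanSpace ℝ (Fin n))} (hne : Q.Nonempty)
    (hc : IsClosed Q) (x : EuclideanSpace ℝ (Fin n)) :
    proj n Q x ∈ Q ∧ dist x (proj n Q x) = Metric.infDist x Q := by
  have h : ∃ p ∈ Q, dist x p = Metric.infDist x Q := by
    obtain ⟨y, hy, hyd⟩ := hc.exists_infDist_eq_dist hne x
    exact ⟨y, hy, hyd.symm⟩
  rw [proj, dif_pos h]
  exact ⟨h.choose_spec.1, h.choose_spec.2⟩

lemma dist_eq_infDist_iff {n : ℕ} {Q : Set (EuclideanSpace ℝ (Fin n))}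
    (hconv : Convex ℝ Q) {z y : EuclideanSpace ℝ (Fin n)} (hy : y ∈ Q) :
    dist z y = Metric.infDist z Q ↔ ∀ w ∈ Q, (inner ℝ (z - y) (w - y) : ℝ) ≤ 0 := by
  have h1 : Metric.infDist z Q = ⨅ w : Q, ‖z - w‖ := by
    rw [Metric.infDist_eq_iInf]; simp_rw [dist_eq_norm]
  rw [dist_eq_norm, h1]
  exact norm_eq_iInf_iff_real_inner_le_zero hconv hy

lemma proj_eq_iff {n : ℕ} {Q : Set (EuclideanSpace ℝ (Fin n))} (hne : Q.Nonempty)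
    (hc : IsClosed Q) (hconv : Convex ℝ Q) {z y : EuclideanSpace ℝ (Fin n)} (hy : y ∈ Q) :
    proj n Q z = y ↔ ∀ w ∈ Q, (inner ℝ (z - y) (w - y) : ℝ) ≤ 0 := by
  obtain ⟨hm, hd⟩ := proj_spec hne hc z
  constructor
  · intro he
    rw [← (dist_eq_infDist_iff hconv hy), ← he]
    exact hd
  · intro hin
    have h1 : ∀ w ∈ Q, (inner ℝ (z - proj n Q z) (w - proj n Q z) : ℝ) ≤ 0 :=
      (dist_eq_infDist_iff hconv hm).1 hd
    have h2 := hin (proj n Q z) hm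
    have h3 := h1 y hy
    have e : (inner ℝ (z - y) (proj n Q z - y) : ℝ)
        + (inner ℝ (z - proj n Q z) (y - proj n Q z) : ℝ)
        = ‖proj n Q z - y‖ ^ 2 := by
      rw [← @real_inner_self_eq_norm_sq]
      rw [show (y : EuclideanSpace ℝ (Fin n)) - proj n Q z = -(proj n Q z - y) by abel]
      rw [inner_neg_right, ← sub_eq_add_neg, ← inner_sub_left]
      rw [show z - y - (z - proj n Q z) = proj n Q z - y by abel]
    have hsq : ‖proj n Q z - y‖ ^ 2 ≤ 0 := by linarith
    have hn : ‖proj n Q z - y‖ = 0 := by nlinarith [norm_nonneg (proj n Q z - y)]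
    exact sub_eq_zero.1 (norm_eq_zero.1 hn)

lemma norm_add_le_aux {n : ℕ} (a b : EuclideanSpace ℝ (Fin n)) (ha : 0 < ‖a‖) :
    ‖a + b‖ ≤ ‖a‖ + ((inner ℝ a b : ℝ) + ‖b‖ ^ 2 / 2) / ‖a‖ := by
  have h2 : ‖a + b‖ ^ 2 = ‖a‖ ^ 2 + 2 * (inner ℝ a b : ℝ) + ‖b‖ ^ 2 := norm_add_sq_real a b
  have key : ‖a + b‖ * ‖a‖ ≤ ‖a‖ ^ 2 + ((inner ℝ a b : ℝ) + ‖b‖ ^ 2 / 2) := by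
    nlinarith [sq_nonneg (‖a + b‖ - ‖a‖)]
  rw [show ‖a‖ + ((inner ℝ a b : ℝ) + ‖b‖ ^ 2 / 2) / ‖a‖
      = (‖a‖ ^ 2 + ((inner ℝ a b : ℝ) + ‖b‖ ^ 2 / 2)) / ‖a‖ by field_simp,
    le_div_iff₀ ha]
  linarith

lemma quad_id {n : ℕ} (lam : ℝ) (v x y : EuclideanSpace ℝ (Fin n)) :
    lam / 2 * ‖y‖ ^ 2 - (inner ℝ v y : ℝ)
      = lam / 2 * ‖x‖ ^ 2 - (inner ℝ v x : ℝ)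
        + (inner ℝ (lam • x - v) (y - x) : ℝ) + lam / 2 * ‖y - x‖ ^ 2 := by
  have h : ‖x + (y - x)‖ ^ 2 = ‖x‖ ^ 2 + 2 * (inner ℝ x (y - x) : ℝ) + ‖y - x‖ ^ 2 :=
    norm_add_sq_real x (y - x)
  rw [add_sub_cancel] at h
  have h2 : (inner ℝ v y : ℝ) = (inner ℝ v x : ℝ) + (inner ℝ v (y - x) : ℝ) := by
    rw [← inner_add_right]; congr 1; abel
  have h3 : (inner ℝ (lam • x - v) (y - x) : ℝ)
      = lam * (inner ℝ x (y - x) : ℝ) - (inner ℝ v (y - x) : ℝ) := by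
    rw [inner_sub_left, real_inner_smul_left]
  rw [h, h2, h3]; ring

lemma dist_subgrad {n : ℕ} {Ω : Set (EuclideanSpace ℝ (Fin n))} (hne : Ω.Nonempty)
    {x Pt : EuclideanSpace ℝ (Fin n)} (hP : Pt ∈ Ω) (hd : 0 < ‖x - Pt‖)
    (hproj : ∀ w ∈ Ω, (inner ℝ (x - Pt) (w - Pt) : ℝ) ≤ 0)
    (y : EuclideanSpace ℝ (Fin n)) :
    ‖x - Pt‖ + (inner ℝ (x - Pt) (y - x) : ℝ) / ‖x - Pt‖ ≤ Metric.infDist y Ω := by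
  rw [Metric.infDist_eq_iInf]
  haveI := hne.to_subtype
  apply le_ciInf
  rintro ⟨w, hw⟩
  have cs : (inner ℝ (x - Pt) (y - w) : ℝ) ≤ ‖x - Pt‖ * ‖y - w‖ := real_inner_le_norm _ _
  have expand : (inner ℝ (x - Pt) (y - w) : ℝ)
      = (inner ℝ (x - Pt) (y - x) : ℝ) + ‖x - Pt‖ ^ 2 - (inner ℝ (x - Pt) (w - Pt) : ℝ) := by
    rw [← @real_inner_self_eq_norm_sq]
    rw [show (y : EuclideanSpace ℝ (Fin n)) - w = (y - x) + ((x - Pt) - (w - Pt)) by abel]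
    simp only [inner_add_right, inner_sub_right]
    ring
  have h4 : ‖x - Pt‖ ^ 2 + (inner ℝ (x - Pt) (y - x) : ℝ) ≤ ‖x - Pt‖ * ‖y - w‖ := by
    have := hproj w hw; linarith
  have : ‖x - Pt‖ + (inner ℝ (x - Pt) (y - x) : ℝ) / ‖x - Pt‖ ≤ ‖y - w‖ := by
    rw [show ‖x - Pt‖ + (inner ℝ (x - Pt) (y - x) : ℝ) / ‖x - Pt‖
        = (‖x - Pt‖ ^ 2 + (inner ℝ (x - Pt) (y - x) : ℝ)) / ‖x - Pt‖ by field_simp]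
    rw [div_le_iff₀ hd]
    nlinarith
  simpa [Subtype.coe_mk, dist_eq_norm] using this

noncomputable def phi (n p : ℕ) (Ω : Fin p → Set (EuclideanSpace ℝ (Fin n)))
    (α : Fin p → ℝ) (lam : ℝ) (v x : EuclideanSpace ℝ (Fin n)) : ℝ :=
  ∑ i, α i * Metric.infDist x (Ω i) + lam / 2 * ‖x‖ ^ 2 - (inner ℝ v x : ℝ)

noncomputable def Fmap (n p : ℕ) (Ω : Fin p → Set (EuclideanSpace ℝ (Fin n)))
    (α : Fin p → ℝ) (lam : ℝ) (v x : EuclideanSpace ℝ (Fin n)) :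
    EuclideanSpace ℝ (Fin n) :=
  (∑ i, α i / Metric.infDist x (Ω i) + lam)⁻¹ •
    ((∑ i, (α i / Metric.infDist x (Ω i)) • proj n (Ω i) x) + v)

set_option maxHeartbeats 1000000 in
theorem weiszfeld_fixed_point_iff_unique_min (n p : ℕ)
    (Ω : Fin p → Set (EuclideanSpace ℝ (Fin n)))
    (hΩ : ∀ i, (Ω i).Nonempty ∧ IsClosed (Ω i) ∧ Convex ℝ (Ω i))
    (S : Set (EuclideanSpace ℝ (Fin n)))
    (hS : S.Nonempty) (hSc : IsClosed S) (hSconv : Convex ℝ S)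
    (hdisj : ∀ i, S ∩ Ω i = ∅)
    (α : Fin p → ℝ) (hα : ∀ i, 0 < α i)
    (lam : ℝ) (hlam : 0 < lam)
    (v : EuclideanSpace ℝ (Fin n))
    (xb : EuclideanSpace ℝ (Fin n)) (hxb : xb ∈ S) :
    proj n S (Fmap n p Ω α lam v xb) = xb ↔
      ((∀ x ∈ S, phi n p Ω α lam v xb ≤ phi n p Ω α lam v x) ∧
       ∀ y ∈ S, (∀ x ∈ S, phi n p Ω α lam v y ≤ phi n p Ω α lam v x) → y = xb) := by
  have hΩne : ∀ i, (Ω i).Nonempty := fun i => (hΩ i).1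
  have hΩc : ∀ i, IsClosed (Ω i) := fun i => (hΩ i).2.1
  have hΩconv : ∀ i, Convex ℝ (Ω i) := fun i => (hΩ i).2.2
  have hxbout : ∀ i, xb ∉ Ω i := fun i hmem =>
    Set.eq_empty_iff_forall_notMem.1 (hdisj i) xb ⟨hxb, hmem⟩
  have hdpos : ∀ i, 0 < Metric.infDist xb (Ω i) := fun i =>
    ((hΩc i).notMem_iff_infDist_pos (hΩne i)).1 (hxbout i)
  have hPmem : ∀ i, proj n (Ω i) xb ∈ Ω i := fun i => (proj_spec (hΩne i) (hΩc i) xb).1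
  have hPnorm : ∀ i, ‖xb - proj n (Ω i) xb‖ = Metric.infDist xb (Ω i) := fun i => by
    rw [← dist_eq_norm]; exact (proj_spec (hΩne i) (hΩc i) xb).2
  have hPproj : ∀ i, ∀ w ∈ Ω i,
      (inner ℝ (xb - proj n (Ω i) xb) (w - proj n (Ω i) xb) : ℝ) ≤ 0 := fun i =>
    (proj_eq_iff (hΩne i) (hΩc i) (hΩconv i) (hPmem i)).1 rfl
  set c : ℝ := ∑ i, α i / Metric.infDist xb (Ω i) + lam with hc
  have hcpos : 0 < c := add_pos_of_nonneg_of_pos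
    (Finset.sum_nonneg fun i _ => div_nonneg (hα i).le (hdpos i).le) hlam
  set g : EuclideanSpace ℝ (Fin n) :=
    (∑ i, (α i / Metric.infDist xb (Ω i)) • (xb - proj n (Ω i) xb)) + lam • xb - v with hgdef
  have hFmap : Fmap n p Ω α lam v xb = xb - c⁻¹ • g := by
    have hsum : (∑ i, (α i / Metric.infDist xb (Ω i)) • proj n (Ω i) xb) + v
        = c • xb - g := by
      rw [hgdef, hc, add_smul, Finset.sum_smul]
      simp only [smul_sub]
      rw [Finset.sum_sub_distrib]
      abel
    rw [Fmap, ← hc, hsum, smul_sub, inv_smul_smul₀ (ne_of_gt hcpos)]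
  have hginner : ∀ u : EuclideanSpace ℝ (Fin n), (inner ℝ g u : ℝ)
      = (∑ i, (α i / Metric.infDist xb (Ω i))
            * (inner ℝ (xb - proj n (Ω i) xb) u : ℝ))
        + (inner ℝ (lam • xb - v) u : ℝ) := by
    intro u
    rw [hgdef]
    rw [show (∑ i, (α i / Metric.infDist xb (Ω i)) • (xb - proj n (Ω i) xb)) + lam • xb - v
        = (∑ i, (α i / Metric.infDist xb (Ω i)) • (xb - proj n (Ω i) xb)) + (lam • xb - v) by
      abel]
    rw [inner_add_left, sum_inner]
    simp only [real_inner_smul_left]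
  have key1 : ∀ y, phi n p Ω α lam v xb + (inner ℝ g (y - xb) : ℝ)
      + lam / 2 * ‖y - xb‖ ^ 2 ≤ phi n p Ω α lam v y := by
    intro y
    have hdist : ∀ i, α i * Metric.infDist xb (Ω i)
        + (α i / Metric.infDist xb (Ω i)) * (inner ℝ (xb - proj n (Ω i) xb) (y - xb) : ℝ)
        ≤ α i * Metric.infDist y (Ω i) := by
      intro i
      have h := dist_subgrad (hΩne i) (hPmem i)
        (by rw [hPnorm i]; exact hdpos i) (hPproj i) y
      rw [hPnorm i] at h
      have h2 := mul_le_mul_of_nonneg_left h (hα i).le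
      refine le_trans (le_of_eq ?_) h2
      have hne := (hdpos i).ne'
      field_simp
    have hsum := Finset.sum_le_sum (s := Finset.univ) (fun i _ => hdist i)
    rw [Finset.sum_add_distrib] at hsum
    have hq := quad_id lam v xb y
    simp only [phi]
    rw [hginner (y - xb)]
    linarith [hsum, hq]
  have key2 : ∀ w, ∀ t : ℝ, 0 < t →
      phi n p Ω α lam v (xb + t • (w - xb))
        ≤ phi n p Ω α lam v xb + t * (inner ℝ g (w - xb) : ℝ)
          + t ^ 2 * (c * (‖w - xb‖ ^ 2 / 2)) := by
    intro w t ht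
    have hptb : ∀ i, α i * Metric.infDist (xb + t • (w - xb)) (Ω i)
        ≤ α i * Metric.infDist xb (Ω i)
          + t * ((α i / Metric.infDist xb (Ω i))
              * (inner ℝ (xb - proj n (Ω i) xb) (w - xb) : ℝ))
          + t ^ 2 * ((α i / Metric.infDist xb (Ω i)) * (‖w - xb‖ ^ 2 / 2)) := by
      intro i
      have h1 : Metric.infDist (xb + t • (w - xb)) (Ω i)
          ≤ ‖(xb - proj n (Ω i) xb) + t • (w - xb)‖ := by
        have h0 := Metric.infDist_le_dist_of_mem (x := xb + t • (w - xb)) (hPmem i)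
        rw [dist_eq_norm] at h0
        refine le_trans h0 (le_of_eq ?_)
        congr 1
        abel
      have h3 := norm_add_le_aux (xb - proj n (Ω i) xb) (t • (w - xb))
        (by rw [hPnorm i]; exact hdpos i)
      rw [hPnorm i, real_inner_smul_right] at h3
      rw [show ‖t • (w - xb)‖ ^ 2 = t ^ 2 * ‖w - xb‖ ^ 2 by
        rw [norm_smul, Real.norm_eq_abs, mul_pow, sq_abs]] at h3
      have h5 := le_trans h1 h3
      have h6 := mul_le_mul_of_nonneg_left h5 (hα i).le
      refine le_trans h6 (le_of_eq ?_)
      have hne := (hdpos i).ne'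
      field_simp
      ring
    have hsum := Finset.sum_le_sum (s := Finset.univ) (fun i _ => hptb i)
    rw [Finset.sum_add_distrib, Finset.sum_add_distrib, ← Finset.mul_sum,
      ← Finset.mul_sum, ← Finset.sum_mul] at hsum
    have hq := quad_id lam v xb (xb + t • (w - xb))
    rw [add_sub_cancel_left, real_inner_smul_right] at hq
    rw [show ‖t • (w - xb)‖ ^ 2 = t ^ 2 * ‖w - xb‖ ^ 2 by
      rw [norm_smul, Real.norm_eq_abs, mul_pow, sq_abs]] at hq
    simp only [phi]
    rw [hginner (w - xb), hc]
    linarith [hsum, hq]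
  have hchar := proj_eq_iff hS hSc hSconv (z := Fmap n p Ω α lam v xb) hxb
  have hFdiff : Fmap n p Ω α lam v xb - xb = -(c⁻¹ • g) := by rw [hFmap]; abel
  have hinner : ∀ w : EuclideanSpace ℝ (Fin n),
      (inner ℝ (Fmap n p Ω α lam v xb - xb) (w - xb) : ℝ)
        = -(c⁻¹ * (inner ℝ g (w - xb) : ℝ)) := by
    intro w
    rw [hFdiff, inner_neg_left, real_inner_smul_left]
  rw [hchar]
  constructor
  · intro h
    have hg0 : ∀ w ∈ S, 0 ≤ (inner ℝ g (w - xb) : ℝ) := by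
      intro w hw
      have h1 := h w hw
      rw [hinner w] at h1
      by_contra hGn
      push_neg at hGn
      nlinarith [mul_neg_of_pos_of_neg (inv_pos.2 hcpos) hGn]
    constructor
    · intro x hx
      have h1 := key1 x
      have h2 := hg0 x hx
      nlinarith [sq_nonneg ‖x - xb‖, mul_nonneg hlam.le (sq_nonneg ‖x - xb‖)]
    · intro y hy hminy
      have h1 := hminy xb hxb
      have h2 := key1 y
      have h3 := hg0 y hy
      have h4 : ‖y - xb‖ ^ 2 ≤ 0 := by nlinarith
      have h5 : ‖y - xb‖ = 0 := by nlinarith [norm_nonneg (y - xb)]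
      exact sub_eq_zero.1 (norm_eq_zero.1 h5)
  · rintro ⟨hmin, -⟩ w hw
    rw [hinner w]
    have hG : 0 ≤ (inner ℝ g (w - xb) : ℝ) := by
      have hT : ∀ t : ℝ, 0 < t → t ≤ 1 →
          -(t * (c * (‖w - xb‖ ^ 2 / 2))) ≤ (inner ℝ g (w - xb) : ℝ) := by
        intro t ht ht1
        have hzS : xb + t • (w - xb) ∈ S := by
          have hmem := hSconv hxb hw (by linarith : (0:ℝ) ≤ 1 - t) ht.le (by ring)
          have heq : xb + t • (w - xb) = (1 - t) • xb + t • w := by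
            rw [smul_sub, sub_smul, one_smul]; abel
          rw [heq]; exact hmem
        have h0 := hmin _ hzS
        have h1 := key2 w t ht
        nlinarith
      by_contra hGn
      push_neg at hGn
      set Cw : ℝ := c * (‖w - xb‖ ^ 2 / 2) with hCw
      set G : ℝ := (inner ℝ g (w - xb) : ℝ) with hGd
      have hC1 : (0:ℝ) < max Cw 1 := lt_of_lt_of_le one_pos (le_max_right _ _)
      set t : ℝ := min 1 (-G / (2 * max Cw 1)) with htdef
      have ht : 0 < t := lt_min one_pos (div_pos (neg_pos.2 hGn) (by linarith))
      have ht1 : t ≤ 1 := min_le_left _ _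
      have h3 := hT t ht ht1
      have h4 : t ≤ -G / (2 * max Cw 1) := min_le_right _ _
      have h5 : Cw ≤ max Cw 1 := le_max_left _ _
      have h6 : t * (2 * max Cw 1) ≤ -G := (le_div_iff₀ (by linarith)).1 h4
      nlinarith [mul_le_mul_of_nonneg_left h5 ht.le]
    have := mul_nonneg (inv_pos.2 hcpos).le hG
    linarith
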